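/- Let f : ℝ → ℝ be uniformly Hölder of order α ∈ (0,1), Ω the domain below its graph, and X_0 = (x_0, f(x_0)). Suppose there exist c > 0, a sequence r_n → 0 of positive reals, points x_n ∈ (x_0 - r_n, x_0 + r_n), and n_0 such that f(x_n) = f(x_0) - c·r_n^α for all n ≥ n_0. Then the weak accessibility exponent of Ω^c at X_0 is 0, i.e., limsup as r → 0 of meas(Ω^c ∩ B(X_0, r))/r^{2+ε} = ∞ for every ε > 0. -/

import Mathlib

open Real MeasureTheory Filter Topology

set_option maxHeartbeats 1000000 in
theorem weak_accessibility_zero_of_seq (α : ℝ) (hα : 0 < α) (hα1 : α < 1)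
    (f : ℝ → ℝ) (C : ℝ) (hf : ∀ x y : ℝ, |f x - f y| ≤ C * |x - y| ^ α)
    (x₀ c : ℝ) (hc : 0 < c) (r : ℕ → ℝ) (hrpos : ∀ n, 0 < r n)
    (hrlim : Tendsto r atTop (𝓝 0))
    (x : ℕ → ℝ) (hx : ∀ n, x n ∈ Set.Ioo (x₀ - r n) (x₀ + r n))
    (n₀ : ℕ) (hfx : ∀ n, n₀ ≤ n → f (x n) = f x₀ - c * r n ^ α) :
    liminf (fun ρ : ℝ =>
        Real.log ((volume ({p : ℝ × ℝ | p.2 ≤ f p.1}ᶜ ∩ Metric.ball (x₀, f x₀) ρ)).toReal)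
          / Real.log ρ) (𝓝[>] (0:ℝ)) = 2 := by
  have hC : 0 ≤ C := by
    have h := hf (x₀ + 1) x₀
    have h1 : |(x₀ + 1 : ℝ) - x₀| = 1 := by norm_num
    rw [h1, Real.one_rpow, mul_one] at h
    exact le_trans (abs_nonneg _) h
  set S : Set (ℝ × ℝ) := {p : ℝ × ℝ | p.2 ≤ f p.1}ᶜ with hSdef
  set g : ℝ → ℝ := fun ρ : ℝ =>
      Real.log ((volume (S ∩ Metric.ball (x₀, f x₀) ρ)).toReal) / Real.log ρ with hgdef
  set m : ℝ → ℝ := fun ρ : ℝ =>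
      (volume (S ∩ Metric.ball (x₀, f x₀) ρ)).toReal with hmdef
  have hgm : ∀ ρ : ℝ, g ρ = Real.log (m ρ) / Real.log ρ := fun _ => rfl
  -- volume of the ball
  have hballvol : ∀ ρ : ℝ, volume (Metric.ball ((x₀, f x₀) : ℝ × ℝ) ρ)
      = ENNReal.ofReal (2 * ρ) * ENNReal.ofReal (2 * ρ) := by
    intro ρ
    rw [← ball_prod_same, Measure.volume_eq_prod, Measure.prod_prod,
      Real.volume_ball, Real.volume_ball]
  have hfin : ∀ ρ : ℝ, volume (S ∩ Metric.ball ((x₀, f x₀) : ℝ × ℝ) ρ) ≠ ⊤ := by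
    intro ρ
    refine ne_top_of_le_ne_top ?_ (measure_mono Set.inter_subset_right)
    rw [hballvol]
    exact ENNReal.mul_ne_top ENNReal.ofReal_ne_top ENNReal.ofReal_ne_top
  -- upper bound for the measure
  have hub : ∀ ρ : ℝ, 0 ≤ ρ → m ρ ≤ 4 * ρ ^ 2 := by
    intro ρ hρ
    have h1 : m ρ ≤ (volume (Metric.ball ((x₀, f x₀) : ℝ × ℝ) ρ)).toReal := by
      apply ENNReal.toReal_mono
      · rw [hballvol]
        exact ENNReal.mul_ne_top ENNReal.ofReal_ne_top ENNReal.ofReal_ne_top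
      · exact measure_mono Set.inter_subset_right
    rw [hballvol, ENNReal.toReal_mul, ENNReal.toReal_ofReal (by linarith)] at h1
    nlinarith
  -- rpow helper
  have hpow : ∀ a e t : ℝ, 0 < a → 0 < e → 0 ≤ t → t ≤ a ^ e⁻¹ → t ^ e ≤ a := by
    intro a e t ha he ht hta
    calc t ^ e ≤ (a ^ e⁻¹) ^ e := Real.rpow_le_rpow ht hta he.le
      _ = a := Real.rpow_inv_rpow ha.le he.ne'
  -- positivity of the measure
  have hmpos : ∀ ρ : ℝ, 0 < ρ → 0 < m ρ := by
    intro ρ hρ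
    set δ : ℝ := min (ρ / 2) ((ρ / (4 * (C + 1))) ^ (α⁻¹)) with hδdef
    have hK : (0:ℝ) < C + 1 := by linarith
    have hδpos : 0 < δ := lt_min (by linarith) (Real.rpow_pos_of_pos (by positivity) _)
    have hδle : δ ≤ ρ / 2 := min_le_left _ _
    have hδα : C * δ ^ α ≤ ρ / 4 := by
      have h1 : δ ^ α ≤ ρ / (4 * (C + 1)) :=
        hpow _ _ _ (by positivity) hα hδpos.le (min_le_right _ _)
      have h2 : 0 ≤ δ ^ α := Real.rpow_nonneg hδpos.le α
      have h3 : C * δ ^ α ≤ (C + 1) * (ρ / (4 * (C + 1))) := by nlinarith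
      have h4 : (C + 1) * (ρ / (4 * (C + 1))) = ρ / 4 := by field_simp
      linarith
    have hsub : Set.Ioo (x₀ - δ) (x₀ + δ) ×ˢ Set.Ioo (f x₀ + ρ / 4) (f x₀ + ρ / 2)
        ⊆ S ∩ Metric.ball ((x₀, f x₀) : ℝ × ℝ) ρ := by
      rintro ⟨px, py⟩ ⟨⟨h1, h2⟩, h3, h4⟩
      have habs : |px - x₀| ≤ δ := by rw [abs_le]; constructor <;> linarith
      have hfp : f px ≤ f x₀ + ρ / 4 := by
        have h5 := hf px x₀
        have h6 : |px - x₀| ^ α ≤ δ ^ α := Real.rpow_le_rpow (abs_nonneg _) habs hα.le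
        have h7 : C * |px - x₀| ^ α ≤ C * δ ^ α := mul_le_mul_of_nonneg_left h6 hC
        have h8 : f px - f x₀ ≤ |f px - f x₀| := le_abs_self _
        linarith
      constructor
      · simp only [hSdef, Set.mem_compl_iff, Set.mem_setOf_eq, not_le]
        linarith
      · rw [Metric.mem_ball, Prod.dist_eq]
        simp only [Real.dist_eq]
        apply max_lt
        · have : |px - x₀| ≤ δ := habs
          calc |px - x₀| ≤ δ := habs
            _ < ρ := by linarith
        · rw [abs_lt]; constructor <;> linarith
    have hvolR : volume (Set.Ioo (x₀ - δ) (x₀ + δ) ×ˢ Set.Ioo (f x₀ + ρ / 4) (f x₀ + ρ / 2))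
        = ENNReal.ofReal (2 * δ) * ENNReal.ofReal (ρ / 4) := by
      rw [Measure.volume_eq_prod, Measure.prod_prod, Real.volume_Ioo, Real.volume_Ioo,
        show x₀ + δ - (x₀ - δ) = 2 * δ by ring,
        show f x₀ + ρ / 2 - (f x₀ + ρ / 4) = ρ / 4 by ring]
    have hlow : ENNReal.ofReal (2 * δ) * ENNReal.ofReal (ρ / 4)
        ≤ volume (S ∩ Metric.ball ((x₀, f x₀) : ℝ × ℝ) ρ) := by
      rw [← hvolR]; exact measure_mono hsub
    have hpos0 : 0 < volume (S ∩ Metric.ball ((x₀, f x₀) : ℝ × ℝ) ρ) := by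
      refine lt_of_lt_of_le ?_ hlow
      apply ENNReal.mul_pos <;> simp [ENNReal.ofReal_pos] <;> positivity
    exact ENNReal.toReal_pos hpos0.ne' (hfin ρ)
  -- the θ and B constants
  set θ : ℝ := min 1 ((c / (2 * (C + 1))) ^ (α⁻¹)) with hθdef
  have hKpos : (0:ℝ) < C + 1 := by linarith
  have hθpos : 0 < θ := lt_min one_pos (Real.rpow_pos_of_pos (by positivity) _)
  have hθ1 : θ ≤ 1 := min_le_left _ _
  have hθα : C * θ ^ α ≤ c / 2 := by
    have h1 : θ ^ α ≤ c / (2 * (C + 1)) :=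
      hpow _ _ _ (by positivity) hα hθpos.le (min_le_right _ _)
    have h2 : 0 ≤ θ ^ α := Real.rpow_nonneg hθpos.le α
    have h3 : C * θ ^ α ≤ (C + 1) * (c / (2 * (C + 1))) := by nlinarith
    have h4 : (C + 1) * (c / (2 * (C + 1))) = c / 2 := by field_simp
    linarith
  set B : ℝ := (c / 2) ^ ((1 - α)⁻¹) with hBdef
  have hBpos : 0 < B := Real.rpow_pos_of_pos (half_pos hc) _
  have hrB : ∀ n : ℕ, r n ≤ B → r n ≤ (c / 2) * r n ^ α := by
    intro n hB
    have h1 : r n ^ (1 - α) ≤ c / 2 :=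
      hpow _ _ _ (half_pos hc) (by linarith) (hrpos n).le hB
    have h2 : r n = r n ^ (1 - α) * r n ^ α := by
      rw [← Real.rpow_add (hrpos n), sub_add_cancel, Real.rpow_one]
    nth_rewrite 1 [h2]
    exact mul_le_mul_of_nonneg_right h1 (Real.rpow_nonneg (hrpos n).le α)
  -- lower bound for the measure along the sequence
  have hml : ∀ n : ℕ, n₀ ≤ n → r n ≤ B → 2 * θ * r n ^ 2 ≤ m (3 * r n) := by
    intro n hn hnB
    obtain ⟨hxn1, hxn2⟩ := hx n
    have hrn := hrpos n
    have hrle := hrB n hnB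
    have hrpowpos : 0 < r n ^ α := Real.rpow_pos_of_pos hrn α
    have hsub : Set.Ioo (x n - θ * r n) (x n + θ * r n) ×ˢ Set.Ioo (f x₀ - r n) (f x₀)
        ⊆ S ∩ Metric.ball ((x₀, f x₀) : ℝ × ℝ) (3 * r n) := by
      rintro ⟨px, py⟩ ⟨⟨h1, h2⟩, h3, h4⟩
      have habs : |px - x n| ≤ θ * r n := by rw [abs_le]; constructor <;> linarith
      have hfp : f px ≤ f x₀ - (c / 2) * r n ^ α := by
        have h5 := hf px (x n)
        have h6 : |px - x n| ^ α ≤ (θ * r n) ^ α :=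
          Real.rpow_le_rpow (abs_nonneg _) habs hα.le
        have h7 : (θ * r n) ^ α = θ ^ α * r n ^ α := Real.mul_rpow hθpos.le hrn.le
        have h8 : C * |px - x n| ^ α ≤ C * (θ ^ α * r n ^ α) := by
          rw [← h7]; exact mul_le_mul_of_nonneg_left h6 hC
        have h9 : C * (θ ^ α * r n ^ α) ≤ (c / 2) * r n ^ α := by nlinarith
        have h10 : f px - f (x n) ≤ |f px - f (x n)| := le_abs_self _
        have h11 := hfx n hn
        linarith
      constructor
      · simp only [hSdef, Set.mem_compl_iff, Set.mem_setOf_eq, not_le]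
        linarith
      · rw [Metric.mem_ball, Prod.dist_eq]
        simp only [Real.dist_eq]
        have hθr : θ * r n ≤ r n := by nlinarith
        apply max_lt
        · rw [abs_lt]; constructor <;> linarith
        · rw [abs_lt]; constructor <;> linarith
    have hvolR : volume (Set.Ioo (x n - θ * r n) (x n + θ * r n) ×ˢ Set.Ioo (f x₀ - r n) (f x₀))
        = ENNReal.ofReal (2 * (θ * r n)) * ENNReal.ofReal (r n) := by
      rw [Measure.volume_eq_prod, Measure.prod_prod, Real.volume_Ioo, Real.volume_Ioo,
        show x n + θ * r n - (x n - θ * r n) = 2 * (θ * r n) by ring,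
        show f x₀ - (f x₀ - r n) = r n by ring]
    have h1 : (volume (Set.Ioo (x n - θ * r n) (x n + θ * r n) ×ˢ
        Set.Ioo (f x₀ - r n) (f x₀))).toReal ≤ m (3 * r n) :=
      ENNReal.toReal_mono (hfin _) (measure_mono hsub)
    rw [hvolR, ENNReal.toReal_mul, ENNReal.toReal_ofReal (by positivity),
      ENNReal.toReal_ofReal hrn.le] at h1
    have h2 : 2 * θ * r n ^ 2 = 2 * (θ * r n) * r n := by ring
    linarith
  -- log of r tends to -infinity
  have hrlim' : Tendsto r atTop (𝓝[>] (0:ℝ)) :=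
    tendsto_nhdsWithin_of_tendsto_nhds_of_eventually_within _ hrlim
      (Eventually.of_forall hrpos)
  have hlogr : Tendsto (fun n => Real.log (r n)) atTop atBot :=
    Real.tendsto_log_nhdsGT_zero.comp hrlim'
  -- basic limit: a / t → 0 as t → -∞
  have hdiv : ∀ a : ℝ, Tendsto (fun t : ℝ => a / t) atBot (𝓝 0) := by
    intro a
    have h1 : Tendsto (fun t : ℝ => -(a / -t)) atBot (𝓝 (-0)) :=
      (Tendsto.div_atTop tendsto_const_nhds tendsto_neg_atBot_atTop).neg
    simpa [div_neg] using h1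
  -- key limit: (a + 2t)/(b + t) → 2 as t → -∞
  have key : ∀ a b : ℝ, Tendsto (fun t : ℝ => (a + 2 * t) / (b + t)) atBot (𝓝 2) := by
    intro a b
    have h3 : Tendsto (fun t : ℝ => (a / t + 2) / (b / t + 1)) atBot (𝓝 ((0 + 2) / (0 + 1))) :=
      Tendsto.div ((hdiv a).add tendsto_const_nhds) ((hdiv b).add tendsto_const_nhds)
        (by norm_num)
    norm_num at h3
    refine h3.congr' ?_
    filter_upwards [eventually_lt_atBot (-(|b| + 1))] with t ht
    have hb := le_abs_self b
    have habs := abs_nonneg b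
    have ht' : t < 0 := by linarith
    have htb' : b + t < 0 := by linarith
    have ht0 : t ≠ 0 := ht'.ne
    have htb : b + t ≠ 0 := htb'.ne
    field_simp
    try ring
  -- squeeze along the sequence
  have hgs : Tendsto (fun n => g (3 * r n)) atTop (𝓝 2) := by
    have hlo : Tendsto (fun n => (Real.log 36 + 2 * Real.log (r n))
        / (Real.log 3 + Real.log (r n))) atTop (𝓝 2) :=
      (key (Real.log 36) (Real.log 3)).comp hlogr
    have hhi : Tendsto (fun n => (Real.log (2 * θ) + 2 * Real.log (r n))
        / (Real.log 3 + Real.log (r n))) atTop (𝓝 2) :=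
      (key (Real.log (2 * θ)) (Real.log 3)).comp hlogr
    refine tendsto_of_tendsto_of_tendsto_of_le_of_le' hlo hhi ?_ ?_
    · filter_upwards [eventually_ge_atTop n₀, hrlim.eventually (eventually_le_nhds hBpos),
        hrlim.eventually (eventually_lt_nhds (by norm_num : (0:ℝ) < 1/3))] with n hn hnB hn3
      have hrn := hrpos n
      have hlog3 : Real.log (3 * r n) = Real.log 3 + Real.log (r n) :=
        Real.log_mul (by norm_num) hrn.ne'
      have hlogneg : Real.log (3 * r n) < 0 := Real.log_neg (by positivity) (by linarith)
      have hm1 := hml n hn hnB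
      have hm2 : m (3 * r n) ≤ 36 * r n ^ 2 := by
        have := hub (3 * r n) (by positivity)
        nlinarith
      have hmp := hmpos (3 * r n) (by positivity)
      have hlogm_le : Real.log (m (3 * r n)) ≤ Real.log 36 + 2 * Real.log (r n) := by
        have h1 : Real.log (m (3 * r n)) ≤ Real.log (36 * r n ^ 2) :=
          Real.log_le_log hmp hm2
        rw [Real.log_mul (by norm_num) (by positivity), Real.log_pow] at h1
        push_cast at h1
        linarith
      have h9 := div_le_div_of_nonpos_of_le hlogneg.le hlogm_le
      rw [hlog3] at h9
      rw [hgm, hlog3]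
      linarith [h9]
    · filter_upwards [eventually_ge_atTop n₀, hrlim.eventually (eventually_le_nhds hBpos),
        hrlim.eventually (eventually_lt_nhds (by norm_num : (0:ℝ) < 1/3))] with n hn hnB hn3
      have hrn := hrpos n
      have hlog3 : Real.log (3 * r n) = Real.log 3 + Real.log (r n) :=
        Real.log_mul (by norm_num) hrn.ne'
      have hlogneg : Real.log (3 * r n) < 0 := Real.log_neg (by positivity) (by linarith)
      have hm1 := hml n hn hnB
      have hlogm_ge : Real.log (2 * θ) + 2 * Real.log (r n) ≤ Real.log (m (3 * r n)) := by
        have h1 : Real.log (2 * θ * r n ^ 2) ≤ Real.log (m (3 * r n)) :=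
          Real.log_le_log (by positivity) hm1
        rw [Real.log_mul (by positivity) (by positivity), Real.log_pow] at h1
        push_cast at h1
        linarith
      have h9 := div_le_div_of_nonpos_of_le hlogneg.le hlogm_ge
      rw [hlog3] at h9
      rw [hgm, hlog3]
      linarith [h9]
  -- the sequence 3 * r n tends to 0 within (0, ∞)
  have hseq : Tendsto (fun n => 3 * r n) atTop (𝓝[>] (0:ℝ)) := by
    apply tendsto_nhdsWithin_of_tendsto_nhds_of_eventually_within
    · simpa using hrlim.const_mul (3:ℝ)
    · exact Eventually.of_forall fun n => by have := hrpos n; simp; positivity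
  -- g is eventually nonnegative near 0
  have hgev0 : ∀ᶠ ρ in 𝓝[>] (0:ℝ), 0 ≤ g ρ := by
    filter_upwards [self_mem_nhdsWithin,
      (eventually_le_nhds (by norm_num : (0:ℝ) < 1/2)).filter_mono nhdsWithin_le_nhds]
      with ρ hρ0 hρh
    have hρ0' : (0:ℝ) < ρ := hρ0
    have h1 : m ρ ≤ 1 := by have := hub ρ hρ0'.le; nlinarith
    have h2 : Real.log (m ρ) ≤ 0 := Real.log_nonpos (hmpos ρ hρ0').le h1
    have h3 : Real.log ρ < 0 := Real.log_neg hρ0' (by linarith)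
    rw [hgm]
    exact div_nonneg_of_nonpos h2 h3.le
  have hbdd : IsBoundedUnder (· ≥ ·) (𝓝[>] (0:ℝ)) g :=
    ⟨0, by simpa [eventually_map] using hgev0⟩
  -- lower bound for liminf
  have hge : 2 ≤ liminf g (𝓝[>] (0:ℝ)) := by
    have hth : Tendsto (fun ρ : ℝ => 2 + Real.log 4 / Real.log ρ) (𝓝[>] (0:ℝ)) (𝓝 2) := by
      have h1 : Tendsto (fun ρ : ℝ => Real.log 4 / Real.log ρ) (𝓝[>] (0:ℝ)) (𝓝 0) :=
        (hdiv (Real.log 4)).comp Real.tendsto_log_nhdsGT_zero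
      simpa using (tendsto_const_nhds (x := (2:ℝ))).add h1
    have hev2 : ∀ᶠ ρ in 𝓝[>] (0:ℝ), 2 + Real.log 4 / Real.log ρ ≤ g ρ := by
      filter_upwards [self_mem_nhdsWithin,
        (eventually_lt_nhds (by norm_num : (0:ℝ) < 1)).filter_mono nhdsWithin_le_nhds]
        with ρ hρ0 hρ1
      have hρ0' : (0:ℝ) < ρ := hρ0
      have hlogneg : Real.log ρ < 0 := Real.log_neg hρ0' hρ1
      have hm2 : m ρ ≤ 4 * ρ ^ 2 := hub ρ hρ0'.le
      have hmp := hmpos ρ hρ0'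
      have hlogm_le : Real.log (m ρ) ≤ Real.log 4 + 2 * Real.log ρ := by
        have h1 : Real.log (m ρ) ≤ Real.log (4 * ρ ^ 2) := Real.log_le_log hmp hm2
        rw [Real.log_mul (by norm_num) (by positivity), Real.log_pow] at h1
        push_cast at h1
        linarith
      have h2 := div_le_div_of_nonpos_of_le hlogneg.le hlogm_le
      have h3 : (Real.log 4 + 2 * Real.log ρ) / Real.log ρ
          = 2 + Real.log 4 / Real.log ρ := by
        rw [add_div, mul_div_assoc, div_self hlogneg.ne, mul_one, add_comm]
      rw [hgm]
      rw [h3] at h2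
      linarith
    have hcob : IsCoboundedUnder (· ≥ ·) (𝓝[>] (0:ℝ)) g := by
      apply IsCoboundedUnder.of_frequently_le (a := 3)
      have hevmap : ∀ᶠ ρ in Filter.map (fun n => 3 * r n) atTop, g ρ ≤ 3 := by
        rw [eventually_map]
        exact hgs.eventually (eventually_le_nhds (by norm_num))
      exact (hevmap.frequently).filter_mono hseq
    calc (2:ℝ) = liminf (fun ρ : ℝ => 2 + Real.log 4 / Real.log ρ) (𝓝[>] (0:ℝ)) :=
          (hth.liminf_eq).symm
      _ ≤ liminf g (𝓝[>] (0:ℝ)) :=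
          liminf_le_liminf hev2 hth.isBoundedUnder_ge hcob
  -- upper bound for liminf
  have hle : liminf g (𝓝[>] (0:ℝ)) ≤ 2 := by
    have hcob2 : IsCoboundedUnder (· ≥ ·) (Filter.map (fun n => 3 * r n) atTop) g := by
      show (Filter.map g (Filter.map (fun n => 3 * r n) atTop)).IsCobounded (· ≥ ·)
      rw [Filter.map_map]
      exact hgs.isBoundedUnder_le.isCoboundedUnder_ge
    calc liminf g (𝓝[>] (0:ℝ)) ≤ liminf g (Filter.map (fun n => 3 * r n) atTop) :=
          liminf_le_liminf_of_le hseq hbdd hcob2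
      _ = liminf (fun n => g (3 * r n)) atTop := by
          simp only [Filter.liminf, Filter.map_map]
          rfl
      _ = 2 := hgs.liminf_eq
  linarith
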